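/- For any positive integer n, every unit of the polynomial ring (ZMod n)[X] is an involution if and only if n divides 12. -/

import Mathlib

open Polynomial

lemma aux_sq_one {R : Type*} [CommRing R]
    (h2 : ∀ x : R, IsNilpotent x → 2 * x = 0)
    (h0 : ∀ x y : R, IsNilpotent x → IsNilpotent y → x * y = 0)
    (hu : ∀ u : Rˣ, (u : R) ^ 2 = 1)
    (u : (Polynomial R)ˣ) : (u : Polynomial R) ^ 2 = 1 := by
  set p := (u : Polynomial R) with hp_def
  obtain ⟨hc0, hci⟩ := Polynomial.isUnit_iff_coeff_isUnit_isNilpotent.mp u.isUnit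
  set q := p - Polynomial.C (p.coeff 0) with hq_def
  have hq : ∀ i, IsNilpotent (q.coeff i) := by
    intro i
    rcases eq_or_ne i 0 with rfl | h
    · simp only [hq_def, Polynomial.coeff_sub, Polynomial.coeff_C_zero, sub_self]
      exact IsNilpotent.zero
    · simpa [hq_def, Polynomial.coeff_C, h] using hci i h
  have hC2 : (2 : Polynomial R) = Polynomial.C 2 :=
    (map_ofNat (Polynomial.C : R →+* Polynomial R) 2).symm
  have h2q : (2 : Polynomial R) * q = 0 := by
    ext i
    rw [hC2, Polynomial.coeff_C_mul, Polynomial.coeff_zero]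
    exact h2 _ (hq i)
  have hqq : q * q = 0 := by
    ext k
    rw [Polynomial.coeff_mul, Polynomial.coeff_zero]
    exact Finset.sum_eq_zero fun x _ => h0 _ _ (hq x.1) (hq x.2)
  have hc : (p.coeff 0) ^ 2 = 1 := by
    have := hu hc0.unit
    rwa [IsUnit.unit_spec] at this
  have hpq : p = Polynomial.C (p.coeff 0) + q := by rw [hq_def]; ring
  have hexp : p ^ 2 = Polynomial.C (p.coeff 0) ^ 2
      + Polynomial.C (p.coeff 0) * ((2 : Polynomial R) * q) + q * q := by
    conv_lhs => rw [hpq]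
    ring
  rw [hexp, h2q, hqq, mul_zero, add_zero, add_zero, ← map_pow, hc, map_one]

lemma units_sq {n : ℕ} (h : ∀ u : (ZMod n)ˣ, u ^ 2 = 1) (u : (ZMod n)ˣ) :
    (u : ZMod n) ^ 2 = 1 := by
  rw [← Units.val_pow_eq_pow_val, h u, Units.val_one]

theorem stmt_13 (n : ℕ) (hn : 0 < n) :
    (∀ u : (Polynomial (ZMod n))ˣ, (u : Polynomial (ZMod n)) ^ 2 = 1) ↔ n ∣ 12 := by
  constructor
  · intro H
    haveI : NeZero n := ⟨hn.ne'⟩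
    -- constants: every unit of ZMod n squares to 1
    have hA : ∀ a : (ZMod n)ˣ, (a : ZMod n) ^ 2 = 1 := by
      intro a
      have := H (Units.map (Polynomial.C : ZMod n →+* Polynomial (ZMod n)).toMonoidHom a)
      simp only [Units.coe_map, RingHom.toMonoidHom_eq_coe, MonoidHom.coe_coe, ← map_pow] at this
      rw [show (1 : Polynomial (ZMod n)) = Polynomial.C 1 from (map_one _).symm] at this
      exact Polynomial.C_injective this
    -- nilpotents of cube zero satisfy x + x = 0
    have hB : ∀ x : ZMod n, x ^ 3 = 0 → x + x = 0 := by
      intro x hx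
      have hinv : (1 + Polynomial.C x * X) * (1 - Polynomial.C x * X
          + Polynomial.C (x ^ 2) * X ^ 2) = 1 := by
        have : (1 + Polynomial.C x * X) * (1 - Polynomial.C x * X
            + Polynomial.C (x ^ 2) * X ^ 2)
            = 1 + Polynomial.C (x ^ 3) * X ^ 3 := by
          simp only [map_pow]; ring
        rw [this, hx, map_zero, zero_mul, add_zero]
      have hsq : (1 + Polynomial.C x * X) ^ 2 = 1 :=
        H ⟨1 + Polynomial.C x * X, 1 - Polynomial.C x * X + Polynomial.C (x ^ 2) * X ^ 2,
          hinv, by rw [mul_comm] at hinv; exact hinv⟩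
      have expand : (1 + Polynomial.C x * X) ^ 2
          = 1 + Polynomial.C (x + x) * X + Polynomial.C (x * x) * X ^ 2 := by
        simp only [map_add, map_mul]; ring
      rw [expand] at hsq
      have h1 := congrArg (fun p => Polynomial.coeff p 1) hsq
      simpa [Polynomial.coeff_one, Polynomial.coeff_C_mul, Polynomial.coeff_X_pow,
        mul_assoc] using h1
    -- 8 does not divide n
    have h8 : ¬ (8 ∣ n) := by
      rintro ⟨k, rfl⟩
      have hk : 0 < k := by omega
      have hx3 : ((2 * k : ℕ) : ZMod (8 * k)) ^ 3 = 0 := by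
        rw [← Nat.cast_pow, ZMod.natCast_eq_zero_iff]
        exact ⟨k ^ 2, by ring⟩
      have := hB _ hx3
      rw [← Nat.cast_add, ZMod.natCast_eq_zero_iff] at this
      have hle := Nat.le_of_dvd (by omega) this
      omega
    -- 9 does not divide n
    have h9 : ¬ (9 ∣ n) := by
      rintro ⟨k, rfl⟩
      have hk : 0 < k := by omega
      have hx3 : ((3 * k : ℕ) : ZMod (9 * k)) ^ 3 = 0 := by
        rw [← Nat.cast_pow, ZMod.natCast_eq_zero_iff]
        exact ⟨3 * k ^ 2, by ring⟩
      have := hB _ hx3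
      rw [← Nat.cast_add, ZMod.natCast_eq_zero_iff] at this
      have hle := Nat.le_of_dvd (by omega) this
      omega
    -- every prime dividing n is 2 or 3
    have hp : ∀ p : ℕ, p.Prime → p ∣ n → p = 2 ∨ p = 3 := by
      intro p pp hpn
      by_contra hcon
      push_neg at hcon
      obtain ⟨hp2, hp3⟩ := hcon
      haveI : Fact p.Prime := ⟨pp⟩
      have h2ne : (2 : ZMod p) ≠ 0 := by
        intro h
        have : (p : ℕ) ∣ 2 := by
          rw [← ZMod.natCast_eq_zero_iff]; exact_mod_cast h
        exact hp2 ((Nat.prime_dvd_prime_iff_eq pp Nat.prime_two).mp this)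
      have h2u : IsUnit (2 : ZMod p) := isUnit_iff_ne_zero.mpr h2ne
      obtain ⟨a, ha⟩ := ZMod.unitsMap_surjective hpn h2u.unit
      have ha2 : a ^ 2 = 1 := Units.ext (by
        rw [Units.val_pow_eq_pow_val, Units.val_one]; exact hA a)
      have hu2 : h2u.unit ^ 2 = 1 := by rw [← ha, ← map_pow, ha2, map_one]
      have h4 : (2 : ZMod p) ^ 2 = 1 := by
        have := congrArg Units.val hu2
        rwa [Units.val_pow_eq_pow_val, IsUnit.unit_spec, Units.val_one] at this
      have h3 : (3 : ZMod p) = 0 := by linear_combination h4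
      have : (p : ℕ) ∣ 3 := by
        rw [← ZMod.natCast_eq_zero_iff]; exact_mod_cast h3
      exact hp3 ((Nat.prime_dvd_prime_iff_eq pp Nat.prime_three).mp this)
    -- conclude n ∣ 12
    rw [← Nat.factorization_le_iff_dvd hn.ne' (by norm_num)]
    rw [Finsupp.le_def]
    intro p
    by_cases pp : p.Prime
    · by_cases hpn : p ∣ n
      · rcases hp p pp hpn with rfl | rfl
        · have hf2 : (12 : ℕ).factorization 2 = 2 := by
            rw [show (12 : ℕ) = 2 ^ 2 * 3 by norm_num,
              Nat.factorization_mul (by norm_num) (by norm_num),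
              Nat.Prime.factorization_pow Nat.prime_two, Nat.Prime.factorization Nat.prime_three]
            simp
          rw [hf2]
          by_contra hcon
          push_neg at hcon
          exact h8 ((Nat.Prime.pow_dvd_iff_le_factorization Nat.prime_two hn.ne').mpr hcon)
        · have hf3 : (12 : ℕ).factorization 3 = 1 := by
            rw [show (12 : ℕ) = 2 ^ 2 * 3 by norm_num,
              Nat.factorization_mul (by norm_num) (by norm_num),
              Nat.Prime.factorization_pow Nat.prime_two, Nat.Prime.factorization Nat.prime_three]
            simp
          rw [hf3]
          by_contra hcon
          push_neg at hcon
          exact h9 ((Nat.Prime.pow_dvd_iff_le_factorization Nat.prime_three hn.ne').mpr hcon)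
      · rw [Nat.factorization_eq_zero_of_not_dvd hpn]; exact Nat.zero_le _
    · rw [Nat.factorization_eq_zero_of_not_prime n pp]; exact Nat.zero_le _
  · intro h u
    have h12 := Nat.le_of_dvd (by norm_num) h
    interval_cases n
    · -- n = 1
      exact Subsingleton.elim _ _
    · -- n = 2
      haveI : Fact (Nat.Prime 2) := ⟨by norm_num⟩
      exact aux_sq_one (fun x hx => by rw [hx.eq_zero, mul_zero])
        (fun x y hx _ => by rw [hx.eq_zero, zero_mul])
        (units_sq (by decide)) u
    · -- n = 3
      haveI : Fact (Nat.Prime 3) := ⟨by norm_num⟩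
      exact aux_sq_one (fun x hx => by rw [hx.eq_zero, mul_zero])
        (fun x y hx _ => by rw [hx.eq_zero, zero_mul])
        (units_sq (by decide)) u
    · -- n = 4
      refine aux_sq_one ?_ ?_ (units_sq (by decide)) u
      · intro x hx
        have h2 := (hx.map (ZMod.castHom (show (2:ℕ) ∣ 4 by norm_num) (ZMod 2))).eq_zero
        exact (by decide : ∀ y : ZMod 4,
          (ZMod.castHom (show (2:ℕ) ∣ 4 by norm_num) (ZMod 2)) y = 0 → 2 * y = 0) x h2
      · intro x y hx hy
        have h2x := (hx.map (ZMod.castHom (show (2:ℕ) ∣ 4 by norm_num) (ZMod 2))).eq_zero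
        have h2y := (hy.map (ZMod.castHom (show (2:ℕ) ∣ 4 by norm_num) (ZMod 2))).eq_zero
        exact (by decide : ∀ a b : ZMod 4,
          (ZMod.castHom (show (2:ℕ) ∣ 4 by norm_num) (ZMod 2)) a = 0 →
          (ZMod.castHom (show (2:ℕ) ∣ 4 by norm_num) (ZMod 2)) b = 0 → a * b = 0) x y h2x h2y
    · norm_num at h
    · -- n = 6
      refine aux_sq_one ?_ ?_ (units_sq (by decide)) u
      · intro x hx
        have h2 := (hx.map (ZMod.castHom (show (2:ℕ) ∣ 6 by norm_num) (ZMod 2))).eq_zero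
        have h3 := (hx.map (ZMod.castHom (show (3:ℕ) ∣ 6 by norm_num) (ZMod 3))).eq_zero
        exact (by decide : ∀ y : ZMod 6,
          (ZMod.castHom (show (2:ℕ) ∣ 6 by norm_num) (ZMod 2)) y = 0 →
          (ZMod.castHom (show (3:ℕ) ∣ 6 by norm_num) (ZMod 3)) y = 0 → 2 * y = 0) x h2 h3
      · intro x y hx hy
        have h2x := (hx.map (ZMod.castHom (show (2:ℕ) ∣ 6 by norm_num) (ZMod 2))).eq_zero
        have h3x := (hx.map (ZMod.castHom (show (3:ℕ) ∣ 6 by norm_num) (ZMod 3))).eq_zero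
        exact (by decide : ∀ a : ZMod 6,
          (ZMod.castHom (show (2:ℕ) ∣ 6 by norm_num) (ZMod 2)) a = 0 →
          (ZMod.castHom (show (3:ℕ) ∣ 6 by norm_num) (ZMod 3)) a = 0 → ∀ b, a * b = 0)
          x h2x h3x y
    · norm_num at h
    · norm_num at h
    · norm_num at h
    · norm_num at h
    · norm_num at h
    · -- n = 12
      refine aux_sq_one ?_ ?_ (units_sq (by decide)) u
      · intro x hx
        have h2 := (hx.map (ZMod.castHom (show (2:ℕ) ∣ 12 by norm_num) (ZMod 2))).eq_zero
        have h3 := (hx.map (ZMod.castHom (show (3:ℕ) ∣ 12 by norm_num) (ZMod 3))).eq_zero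
        exact (by decide : ∀ y : ZMod 12,
          (ZMod.castHom (show (2:ℕ) ∣ 12 by norm_num) (ZMod 2)) y = 0 →
          (ZMod.castHom (show (3:ℕ) ∣ 12 by norm_num) (ZMod 3)) y = 0 → 2 * y = 0) x h2 h3
      · intro x y hx hy
        have h2x := (hx.map (ZMod.castHom (show (2:ℕ) ∣ 12 by norm_num) (ZMod 2))).eq_zero
        have h3x := (hx.map (ZMod.castHom (show (3:ℕ) ∣ 12 by norm_num) (ZMod 3))).eq_zero
        have h2y := (hy.map (ZMod.castHom (show (2:ℕ) ∣ 12 by norm_num) (ZMod 2))).eq_zero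
        have h3y := (hy.map (ZMod.castHom (show (3:ℕ) ∣ 12 by norm_num) (ZMod 3))).eq_zero
        exact (by decide : ∀ a b : ZMod 12,
          (ZMod.castHom (show (2:ℕ) ∣ 12 by norm_num) (ZMod 2)) a = 0 →
          (ZMod.castHom (show (3:ℕ) ∣ 12 by norm_num) (ZMod 3)) a = 0 →
          (ZMod.castHom (show (2:ℕ) ∣ 12 by norm_num) (ZMod 2)) b = 0 →
          (ZMod.castHom (show (3:ℕ) ∣ 12 by norm_num) (ZMod 3)) b = 0 → a * b = 0)
          x y h2x h3x h2y h3y
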